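/- Let X ⊆ ℕ be an infinite set with uniqueness of sums, and let u be an X-adequate ultrafilter on ℕ. Then u generates a free subsemigroup: for all n, m ≥ 1, u^n = u^m implies n = m. -/

import Mathlib

open Filter

attribute [local instance] Ultrafilter.add Ultrafilter.addSemigroup

/-- `sumPow u n` is the `n`-fold sum `u + ⋯ + u` of the ultrafilter `u`, for `n ≥ 1`
(with junk value `u` at `n = 0`). -/
def sumPow (u : Ultrafilter ℕ) : ℕ → Ultrafilter ℕ
  | 0 => u
  | 1 => u
  | n + 2 => sumPow u (n + 1) + u

/-- `FS A` is the set of all sums of nonempty finite subsets of `A`. -/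
def FS (A : Set ℕ) : Set ℕ :=
  {s | ∃ F : Finset ℕ, F.Nonempty ∧ ↑F ⊆ A ∧ s = ∑ i ∈ F, i}

/-- `A` has uniqueness of sums: two nonempty finite subsets of `A` with the same sum are equal. -/
def UniquenessOfSums (A : Set ℕ) : Prop :=
  ∀ F G : Finset ℕ, ↑F ⊆ A → ↑G ⊆ A → F.Nonempty → G.Nonempty →
    (∑ i ∈ F, i) = ∑ i ∈ G, i → F = G

/-- `A` is `X`-adequate: `A ⊆ FS X` and for every subsequence of the increasing enumeration
of `X` there is a unique `m` such that the sum of the first `m + 1` terms lies in `A`. -/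
def IsAdequateSet (X A : Set ℕ) : Prop :=
  A ⊆ FS X ∧ ∀ g : ℕ → ℕ, StrictMono g →
    ∃! m : ℕ, (∑ k ∈ Finset.range (m + 1), Nat.nth (· ∈ X) (g k)) ∈ A

/-- An ultrafilter `u` is `X`-adequate: some `X`-adequate set belongs to `u`, and `FS Y ∈ u`
for every cofinite subset `Y` of `X`. -/
def IsAdequateUltrafilter (X : Set ℕ) (u : Ultrafilter ℕ) : Prop :=
  (∃ A ∈ u, IsAdequateSet X A) ∧
    ∀ Y : Set ℕ, Y ⊆ X → (X \ Y).Finite → FS Y ∈ u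

-- helpers

lemma sum_range_getD (l : List ℕ) :
    ∑ k ∈ Finset.range l.length, l.getD k 0 = l.sum := by
  induction l with
  | nil => simp
  | cons a l ih =>
    rw [List.length_cons, Finset.sum_range_succ']
    simp only [List.getD_cons_succ, List.getD_cons_zero, ih, List.sum_cons]
    omega

lemma sum_range_getD_take (l : List ℕ) (t : ℕ) (ht : t ≤ l.length) :
    ∑ k ∈ Finset.range t, l.getD k 0 = (l.take t).sum := by
  have hlen : (l.take t).length = t := by simp [ht]
  rw [← sum_range_getD (l.take t), hlen]
  refine Finset.sum_congr rfl fun k hk => ?_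
  rw [Finset.mem_range] at hk
  rw [List.getD_eq_getElem _ _ (by omega), List.getD_eq_getElem _ _ (by omega)]
  exact (List.getElem_take).symm

lemma sort_sum (s : Finset ℕ) : (s.sort (· ≤ ·)).sum = ∑ i ∈ s, i := by
  rw [List.Perm.sum_eq (Finset.sort_perm_toList s (· ≤ ·))]
  calc s.toList.sum = (s.toList.map id).sum := by rw [List.map_id]
    _ = ∑ i ∈ s, i := Finset.sum_map_toList s id

-- the key adequacy lemma: nested "initial" subsets of X with sums in A are equal

lemma adequate_initial (X : Set ℕ) {A : Set ℕ} (hA : IsAdequateSet X A)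
    (c d : Finset ℕ) (hdX : ↑d ⊆ X) (hc : c.Nonempty)
    (hcd : c ⊆ d) (hinit : ∀ x ∈ c, ∀ y ∈ d, y ∉ c → x < y)
    (hcA : (∑ i ∈ c, i) ∈ A) (hdA : (∑ i ∈ d, i) ∈ A) : c = d := by
  classical
  set p : ℕ → Prop := fun t => t ∈ X with hp
  set l : List ℕ := c.sort (· ≤ ·) ++ (d \ c).sort (· ≤ ·) with hl
  have hlX : ∀ x ∈ l, x ∈ X := by
    intro x hx
    rw [hl, List.mem_append, Finset.mem_sort, Finset.mem_sort] at hx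
    rcases hx with hx | hx
    · exact hdX (hcd hx)
    · exact hdX (Finset.mem_sdiff.1 hx).1
  have hsorted : l.Pairwise (· < ·) := by
    rw [hl, List.pairwise_append]
    refine ⟨(Finset.sortedLT_sort c).pairwise, (Finset.sortedLT_sort (d \ c)).pairwise, ?_⟩
    intro x hx y hy
    rw [Finset.mem_sort] at hx hy
    rw [Finset.mem_sdiff] at hy
    exact hinit x hx y hy.1 hy.2
  have hlpos : 0 < l.length := by
    rw [hl]
    obtain ⟨x, hx⟩ := hc
    have : x ∈ c.sort (· ≤ ·) := (Finset.mem_sort _).2 hx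
    have := List.length_pos_iff.2 (List.ne_nil_of_mem this)
    simp only [List.length_append]
    omega
  have hlne : l ≠ [] := List.length_pos_iff.1 hlpos
  set g : ℕ → ℕ := fun k =>
    if h : k < l.length then Nat.count p l[k] else Nat.count p (l.getLast hlne) + (k + 1 - l.length)
    with hg
  have hgl : ∀ k (h : k < l.length), g k = Nat.count p l[k] := by
    intro k h; rw [hg]; simp [h]
  have hgmono : StrictMono g := by
    apply strictMono_nat_of_lt_succ
    intro k
    rcases lt_trichotomy (k + 1) l.length with h | h | h
    · rw [hgl k (by omega), hgl (k + 1) h]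
      have hlt : l[k] < l[k + 1] := List.Pairwise.sortedLT hsorted
        (show (⟨k, by omega⟩ : Fin l.length) < ⟨k + 1, h⟩ by simp)
      exact Nat.count_strict_mono (hlX _ (l.getElem_mem _)) hlt
    · have hk : k < l.length := by omega
      rw [hgl k hk, hg]
      simp only [h.symm ▸ lt_irrefl (k+1), dif_neg (by omega : ¬ k + 1 < l.length)]
      have : l.getLast hlne = l[k] := by
        rw [List.getLast_eq_getElem]
        congr 1
        omega
      rw [this]
      omega
    · rw [hg]
      simp only [dif_neg (by omega : ¬ k < l.length), dif_neg (by omega : ¬ k + 1 < l.length)]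
      omega
  have hsum : ∀ t, 0 < t → t ≤ l.length →
      ∑ k ∈ Finset.range t, Nat.nth p (g k) = (l.take t).sum := by
    intro t _ ht
    rw [← sum_range_getD_take l t ht]
    refine Finset.sum_congr rfl fun k hk => ?_
    rw [Finset.mem_range] at hk
    have hkl : k < l.length := by omega
    rw [hgl k hkl, Nat.nth_count (hlX _ (l.getElem_mem _)), List.getD_eq_getElem _ _ hkl]
  obtain ⟨m, _, hmuniq⟩ := hA.2 g hgmono
  have hccard : 0 < c.card := Finset.card_pos.2 hc
  have hclen : c.card ≤ l.length := by rw [hl]; simp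
  have h1 : (∑ k ∈ Finset.range (c.card - 1 + 1), Nat.nth p (g k)) ∈ A := by
    rw [show c.card - 1 + 1 = c.card by omega, hsum c.card hccard hclen, hl,
      List.take_left' (by simp), sort_sum]
    exact hcA
  have h2 : (∑ k ∈ Finset.range (l.length - 1 + 1), Nat.nth p (g k)) ∈ A := by
    rw [show l.length - 1 + 1 = l.length by omega, hsum l.length hlpos le_rfl,
      List.take_length, hl, List.sum_append, sort_sum, sort_sum]
    have heq : ∑ i ∈ c, i + ∑ i ∈ d \ c, i = ∑ i ∈ d, i := by
      rw [Nat.add_comm]; exact Finset.sum_sdiff hcd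
    rw [heq]
    exact hdA
  have := (hmuniq _ h1).trans (hmuniq _ h2).symm
  have hcard : c.card = l.length := by omega
  have : (d \ c).card = 0 := by
    rw [hl] at hcard
    simp only [List.length_append, Finset.length_sort] at hcard
    omega
  have hdc : d \ c = ∅ := Finset.card_eq_zero.1 this
  apply Finset.Subset.antisymm hcd
  intro x hx
  by_contra hxc
  have : x ∈ d \ c := Finset.mem_sdiff.2 ⟨hx, hxc⟩
  rw [hdc] at this
  exact absurd this (Finset.notMem_empty x)


-- blocks

def blockRel (c d : Finset ℕ) : Prop := ∀ x ∈ c, ∀ y ∈ d, x < y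

def IsBlocks (X A : Set ℕ) (L : List (Finset ℕ)) : Prop :=
  (∀ c ∈ L, c.Nonempty ∧ ↑c ⊆ X ∧ (∑ i ∈ c, i) ∈ A) ∧ L.Pairwise blockRel

def unionL (L : List (Finset ℕ)) : Finset ℕ := L.foldr (· ∪ ·) ∅

lemma mem_unionL {x : ℕ} {L : List (Finset ℕ)} : x ∈ unionL L ↔ ∃ c ∈ L, x ∈ c := by
  induction L with
  | nil => simp [unionL]
  | cons c L ih =>
    simp only [unionL, List.foldr_cons, Finset.mem_union, List.mem_cons]
    rw [show L.foldr (· ∪ ·) ∅ = unionL L from rfl, ih]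
    constructor
    · rintro (h | ⟨e, he, hx⟩)
      · exact ⟨c, Or.inl rfl, h⟩
      · exact ⟨e, Or.inr he, hx⟩
    · rintro ⟨e, (rfl | he), hx⟩
      · exact Or.inl hx
      · exact Or.inr ⟨e, he, hx⟩

lemma unionL_cons (c : Finset ℕ) (L : List (Finset ℕ)) :
    unionL (c :: L) = c ∪ unionL L := rfl

lemma disjoint_head {c : Finset ℕ} {L : List (Finset ℕ)}
    (h : ∀ e ∈ L, blockRel c e) : Disjoint c (unionL L) := by
  rw [Finset.disjoint_left]
  intro x hxc hxL
  obtain ⟨e, he, hxe⟩ := mem_unionL.1 hxL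
  exact lt_irrefl x (h e he x hxc x hxe)

lemma sum_unionL {L : List (Finset ℕ)} (h : L.Pairwise blockRel) :
    ∑ i ∈ unionL L, i = (L.map fun c => ∑ i ∈ c, i).sum := by
  induction L with
  | nil => simp [unionL]
  | cons c L ih =>
    rw [List.pairwise_cons] at h
    rw [unionL_cons, List.map_cons, List.sum_cons,
      Finset.sum_union (disjoint_head h.1), ih h.2]

lemma unionL_subset_X {X A : Set ℕ} {L : List (Finset ℕ)} (h : IsBlocks X A L) :
    ↑(unionL L) ⊆ X := by
  intro x hx
  obtain ⟨e, he, hxe⟩ := mem_unionL.1 hx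
  exact (h.1 e he).2.1 hxe

-- uniqueness of block decompositions

lemma blocks_unique (X : Set ℕ) {A : Set ℕ} (hA : IsAdequateSet X A) :
    ∀ L M : List (Finset ℕ), IsBlocks X A L → IsBlocks X A M →
      unionL L = unionL M → L = M := by
  intro L
  induction L with
  | nil =>
    intro M _ hM hU
    cases M with
    | nil => rfl
    | cons d M' =>
      obtain ⟨x, hx⟩ := (hM.1 d (by simp)).1
      have : x ∈ unionL (d :: M') := mem_unionL.2 ⟨d, by simp, hx⟩
      rw [← hU] at this
      simp [unionL] at this
  | cons c L' ih =>
    intro M hL hM hU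
    cases M with
    | nil =>
      obtain ⟨x, hx⟩ := (hL.1 c (by simp)).1
      have : x ∈ unionL (c :: L') := mem_unionL.2 ⟨c, by simp, hx⟩
      rw [hU] at this
      simp [unionL] at this
    | cons d M' =>
      set F := unionL (c :: L') with hF
      have hcF : c ⊆ F := fun x hx => mem_unionL.2 ⟨c, by simp, hx⟩
      have hdF : d ⊆ F := by
        rw [hU]; exact fun x hx => mem_unionL.2 ⟨d, by simp, hx⟩
      have hFX : ↑F ⊆ X := unionL_subset_X hL
      have hcne : c.Nonempty := (hL.1 c (by simp)).1
      have hdne : d.Nonempty := (hM.1 d (by simp)).1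
      have hcA : (∑ i ∈ c, i) ∈ A := (hL.1 c (by simp)).2.2
      have hdA : (∑ i ∈ d, i) ∈ A := (hM.1 d (by simp)).2.2
      have hLpw := (List.pairwise_cons.1 hL.2).1
      have hMpw := (List.pairwise_cons.1 hM.2).1
      have hinitc : ∀ x ∈ c, ∀ y ∈ F, y ∉ c → x < y := by
        intro x hx y hy hyc
        rw [hF, unionL_cons, Finset.mem_union] at hy
        rcases hy with hy | hy
        · exact absurd hy hyc
        · obtain ⟨e, he, hye⟩ := mem_unionL.1 hy
          exact hLpw e he x hx y hye
      have hinitd : ∀ x ∈ d, ∀ y ∈ F, y ∉ d → x < y := by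
        intro x hx y hy hyd
        rw [hU, unionL_cons, Finset.mem_union] at hy
        rcases hy with hy | hy
        · exact absurd hy hyd
        · obtain ⟨e, he, hye⟩ := mem_unionL.1 hy
          exact hMpw e he x hx y hye
      -- two initial segments are nested
      have hnest : ∀ c' d' : Finset ℕ, c' ⊆ F → d' ⊆ F →
          (∀ x ∈ c', ∀ y ∈ F, y ∉ c' → x < y) → (∀ x ∈ d', ∀ y ∈ F, y ∉ d' → x < y) →
          c'.card ≤ d'.card → c' ⊆ d' := by
        intro c' d' hc'F hd'F hic hid hcard
        intro x hx
        by_contra hxd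
        have hdsub : d' ⊆ c'.erase x := by
          intro w hw
          have hwx : w < x := hid w hw x (hc'F hx) hxd
          have hwc : w ∈ c' := by
            by_contra hwc
            exact absurd (hic x hx w (hd'F hw) hwc) (by omega)
          exact Finset.mem_erase.2 ⟨by omega, hwc⟩
        have := Finset.card_le_card hdsub
        have := Finset.card_erase_of_mem hx
        have := Finset.card_pos.2 ⟨x, hx⟩
        omega
      have hcd : c = d := by
        rcases le_total c.card d.card with hle | hle
        · exact adequate_initial X hA c d (fun x hx => hFX (hdF hx)) hcne
            (hnest c d hcF hdF hinitc hinitd hle)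
            (fun x hx y hy hyc => hinitc x hx y (hdF hy) hyc) hcA hdA
        · exact (adequate_initial X hA d c (fun x hx => hFX (hcF hx)) hdne
            (hnest d c hdF hcF hinitd hinitc hle)
            (fun x hx y hy hyd => hinitd x hx y (hcF hy) hyd) hdA hcA).symm
      subst hcd
      have htails : unionL L' = unionL M' := by
        have h1 : c ∪ unionL L' = c ∪ unionL M' := by
          rw [← unionL_cons, ← unionL_cons]; exact hU
        have d1 := disjoint_head hLpw
        have d2 := disjoint_head hMpw
        rw [← Finset.union_sdiff_cancel_left d1, ← Finset.union_sdiff_cancel_left d2, h1]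
      have hLb : IsBlocks X A L' := ⟨fun e he => hL.1 e (by simp [he]),
        (List.pairwise_cons.1 hL.2).2⟩
      have hMb : IsBlocks X A M' := ⟨fun e he => hM.1 e (by simp [he]),
        (List.pairwise_cons.1 hM.2).2⟩
      rw [ih M' hLb hMb htails]


def BSet (X A : Set ℕ) (n : ℕ) : Set ℕ :=
  {s | ∃ L : List (Finset ℕ), IsBlocks X A L ∧ L.length = n ∧
    s = (L.map fun c => ∑ i ∈ c, i).sum}

lemma sumPow_succ (u : Ultrafilter ℕ) (n : ℕ) (hn : 1 ≤ n) :
    sumPow u (n + 1) = sumPow u n + u := by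
  cases n with
  | zero => omega
  | succ k => rfl

lemma BSet_mem (X : Set ℕ) {A : Set ℕ} (hA : IsAdequateSet X A)
    (u : Ultrafilter ℕ) (hAu : A ∈ u) (hu : IsAdequateUltrafilter X u) :
    ∀ n, 1 ≤ n → BSet X A n ∈ sumPow u n := by
  intro n hn
  induction n with
  | zero => omega
  | succ n ih =>
    rcases Nat.eq_or_lt_of_le hn with h1 | h2
    · -- n + 1 = 1
      have hn0 : n = 0 := by omega
      subst hn0
      apply u.sets_of_superset hAu
      intro a ha
      obtain ⟨F, hFne, hFX, hFs⟩ := hA.1 ha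
      exact ⟨[F], ⟨by simpa using ⟨hFne, hFX, hFs ▸ ha⟩, by simp⟩, rfl, by simpa using hFs⟩
    · have hn1 : 1 ≤ n := by omega
      rw [sumPow_succ u n hn1]
      have hmem : ∀ a ∈ BSet X A n, {b | a + b ∈ BSet X A (n + 1)} ∈ u := by
        intro a ha
        obtain ⟨L, hL, hLlen, hLsum⟩ := ha
        set N := (unionL L).sup id with hN
        have hY : FS (X ∩ {y | N < y}) ∈ u := by
          apply hu.2
          · exact Set.inter_subset_left
          · apply Set.Finite.subset (Set.finite_Iic N)
            intro y hy
            simp only [Set.mem_diff, Set.mem_inter_iff, Set.mem_setOf_eq, not_and] at hy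
            simp only [Set.mem_Iic]
            by_contra h
            exact hy.2 hy.1 (by omega)
        apply u.sets_of_superset (u.inter_sets hAu hY)
        rintro b ⟨hbA, G, hGne, hGY, hGs⟩
        refine ⟨L ++ [G], ⟨?_, ?_⟩, by simp [hLlen], ?_⟩
        · intro e he
          rw [List.mem_append] at he
          rcases he with he | he
          · exact hL.1 e he
          · simp only [List.mem_singleton] at he
            subst he
            exact ⟨hGne, fun x hx => (hGY hx).1, hGs ▸ hbA⟩
        · rw [List.pairwise_append]
          refine ⟨hL.2, by simp, ?_⟩
          intro e he g hg
          simp only [List.mem_singleton] at hg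
          subst hg
          intro x hx y hy
          have hxN : x ≤ N := Finset.le_sup (f := id) (mem_unionL.2 ⟨e, he, hx⟩)
          have hyN : N < y := (hGY hy).2
          omega
        · rw [List.map_append, List.sum_append, ← hLsum, hGs]
          simp
      have : BSet X A n ⊆ {a | {b | a + b ∈ BSet X A (n + 1)} ∈ u} := hmem
      have hBn := ih hn1
      have hsub : {a | {b | a + b ∈ BSet X A (n + 1)} ∈ u} ∈ sumPow u n :=
        (sumPow u n).sets_of_superset hBn this
      exact hsub

/-- If `X` is infinite with uniqueness of sums and `u` is an `X`-adequate ultrafilter, then `u`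
generates a free subsemigroup: `u^n = u^m → n = m` for `n, m ≥ 1`. -/
theorem statement4 (X : Set ℕ) (hXinf : X.Infinite) (hX : UniquenessOfSums X)
    (u : Ultrafilter ℕ) (hu : IsAdequateUltrafilter X u) :
    ∀ n m : ℕ, 1 ≤ n → 1 ≤ m → sumPow u n = sumPow u m → n = m := by
  obtain ⟨A, hAu, hA⟩ := hu.1
  intro n m hn hm heq
  have hBn : BSet X A n ∈ sumPow u n := BSet_mem X hA u hAu hu n hn
  have hBm : BSet X A m ∈ sumPow u n := heq ▸ BSet_mem X hA u hAu hu m hm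
  obtain ⟨s, hsn, hsm⟩ := Ultrafilter.nonempty_of_mem ((sumPow u n).inter_sets hBn hBm)
  obtain ⟨L, hL, hLlen, hLsum⟩ := hsn
  obtain ⟨M, hM, hMlen, hMsum⟩ := hsm
  have hUL : ∑ i ∈ unionL L, i = ∑ i ∈ unionL M, i := by
    rw [sum_unionL hL.2, sum_unionL hM.2, ← hLsum, ← hMsum]
  have hLne : L ≠ [] := by intro h; rw [h] at hLlen; simp at hLlen; omega
  have hMne : M ≠ [] := by intro h; rw [h] at hMlen; simp at hMlen; omega
  have hULne : (unionL L).Nonempty := by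
    obtain ⟨c, L', rfl⟩ := List.exists_cons_of_ne_nil hLne
    obtain ⟨x, hx⟩ := (hL.1 c (by simp)).1
    exact ⟨x, mem_unionL.2 ⟨c, by simp, hx⟩⟩
  have hUMne : (unionL M).Nonempty := by
    obtain ⟨c, M', rfl⟩ := List.exists_cons_of_ne_nil hMne
    obtain ⟨x, hx⟩ := (hM.1 c (by simp)).1
    exact ⟨x, mem_unionL.2 ⟨c, by simp, hx⟩⟩
  have hUeq : unionL L = unionL M :=
    hX _ _ (unionL_subset_X hL) (unionL_subset_X hM) hULne hUMne hUL
  have : L = M := blocks_unique X hA L M hL hM hUeq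
  rw [← hLlen, ← hMlen, this]
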